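/- arXiv:1905.01579 — 4 statements merged into one kernel-verified Lean document; each statement's English description precedes it below -/
import Mathlib

section
/- The space [P_n(ℝ³)]³ of vector-valued polynomials of degree at most n in three variables decomposes as a direct sum [P_n]³ = curl([P_{n+1}]³) ⊕ x·P_{n-1}, where curl([P_{n+1}]³) is the space of curls of vector polynomials of degree at most n+1 and x·P_{n-1} is the space of products of the position vector x with scalar polynomials of degree at most n-1. -/
open MvPolynomial

noncomputable section

abbrev Poly3 := MvPolynomial (Fin 3) ℝ

/-- `p ∈ P_m(ℝ³)` (total degree at most `m`, with `P_m = {0}` for `m < 0`). -/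
def degLE (m : ℤ) (p : Poly3) : Prop := p = 0 ∨ (p.totalDegree : ℤ) ≤ m

/-- Curl of a vector polynomial. -/
def pcurl (v : Fin 3 → Poly3) : Fin 3 → Poly3 :=
  ![pderiv 1 (v 2) - pderiv 2 (v 1),
    pderiv 2 (v 0) - pderiv 0 (v 2),
    pderiv 0 (v 1) - pderiv 1 (v 0)]

/-- The vector field `x · q = (x₁ q, x₂ q, x₃ q)` for a scalar polynomial `q`. -/
def xmul (q : Poly3) : Fin 3 → Poly3 := fun i => X i * q

/-- Euler operator. -/
def Ediv (p : Poly3) : Poly3 := X 0 * pderiv 0 p + X 1 * pderiv 1 p + X 2 * pderiv 2 p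
/-- divergence -/
def divg (v : Fin 3 → Poly3) : Poly3 := pderiv 0 (v 0) + pderiv 1 (v 1) + pderiv 2 (v 2)
def degm (m : Fin 3 →₀ ℕ) : ℕ := m 0 + m 1 + m 2

lemma degm_eq (m : Fin 3 →₀ ℕ) : (m.sum fun _ e => e) = degm m := by
  rw [Finsupp.sum_fintype _ _ (fun _ => rfl), Fin.sum_univ_three]; rfl


lemma fin3_mk0 (h : 0 < 3) : (⟨0, h⟩ : Fin 3) = 0 := rfl
lemma fin3_mk1 (h : 1 < 3) : (⟨1, h⟩ : Fin 3) = 1 := rfl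
lemma fin3_mk2 (h : 2 < 3) : (⟨2, h⟩ : Fin 3) = 2 := rfl

lemma pderiv_pderiv (i j : Fin 3) (p : Poly3) :
    pderiv i (pderiv j p) = pderiv j (pderiv i p) := by
  induction p using MvPolynomial.induction_on' with
  | add p q hp hq => simp [hp, hq]
  | monomial m c =>
    by_cases h : i = j
    · subst h; rfl
    · simp only [pderiv_monomial]
      rw [Finsupp.tsub_apply, Finsupp.tsub_apply,
        Finsupp.single_eq_of_ne' h, Finsupp.single_eq_of_ne' (Ne.symm h)]
      rw [tsub_right_comm]
      congr 1
      simp [mul_right_comm]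

lemma degm_eq' (m : Fin 3 →₀ ℕ) : (m.sum fun _ => id) = degm m := by
  rw [Finsupp.sum_fintype _ _ (fun _ => rfl), Fin.sum_univ_three]; rfl

lemma X_mul_pderiv_monomial (i : Fin 3) (m : Fin 3 →₀ ℕ) (c : ℝ) :
    X i * pderiv i (monomial m c) = monomial m (c * m i) := by
  rw [pderiv_monomial]
  by_cases h : m i = 0
  · simp [h]
  · rw [X, monomial_mul, one_mul]
    have hm : (Finsupp.single i 1) + (m - Finsupp.single i 1) = m := by
      ext j
      by_cases hj : j = i
      · subst hj
        simp only [Finsupp.add_apply, Finsupp.single_eq_same, Finsupp.tsub_apply]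
        omega
      · simp [Finsupp.single_eq_of_ne' (Ne.symm hj), Finsupp.tsub_apply,
          Finsupp.single_eq_of_ne' (Ne.symm hj)]
    rw [hm]

lemma Ediv_monomial (m : Fin 3 →₀ ℕ) (c : ℝ) :
    Ediv (monomial m c) = monomial m (c * (degm m : ℝ)) := by
  rw [Ediv, X_mul_pderiv_monomial, X_mul_pderiv_monomial, X_mul_pderiv_monomial,
    ← map_add, ← map_add]
  congr 1
  rw [degm]
  push_cast
  ring

lemma Ediv_sum {A : Type*} (s : Finset A) (f : A → Poly3) :
    Ediv (∑ x ∈ s, f x) = ∑ x ∈ s, Ediv (f x) := by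
  simp [Ediv, map_sum, Finset.mul_sum, Finset.sum_add_distrib]

lemma Ediv_sub (p q : Poly3) : Ediv (p - q) = Ediv p - Ediv q := by
  simp [Ediv, map_sub, mul_sub]; ring

/-- key uniqueness lemma: `3q + Euler q = 0` forces `q = 0`. -/
lemma eq_zero_of_three_add_Ediv {q : Poly3} (h : C 3 * q + Ediv q = 0) : q = 0 := by
  by_contra hq
  obtain ⟨m₀, hm₀⟩ := support_nonempty.mpr hq
  have hEq : Ediv q = ∑ m ∈ q.support, monomial m (coeff m q * (degm m : ℝ)) := by
    conv_lhs => rw [← support_sum_monomial_coeff q, Ediv_sum]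
    exact Finset.sum_congr rfl fun m _ => Ediv_monomial m _
  have h0 : coeff m₀ (C 3 * q + Ediv q) = 0 := by rw [h]; simp
  rw [coeff_add, coeff_C_mul, hEq, coeff_sum] at h0
  simp only [coeff_monomial] at h0
  rw [Finset.sum_ite_eq' q.support m₀ (fun m => coeff m q * (degm m : ℝ)), if_pos hm₀] at h0
  have hc : coeff m₀ q = 0 := by
    have : coeff m₀ q * (3 + (degm m₀ : ℝ)) = 0 := by linarith [h0]
    have hne : (3 : ℝ) + (degm m₀ : ℝ) ≠ 0 := by positivity
    exact (mul_eq_zero.mp this).resolve_right hne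
  exact (mem_support_iff.mp hm₀) hc

lemma divg_pcurl (w : Fin 3 → Poly3) : divg (pcurl w) = 0 := by
  show pderiv 0 (pderiv 1 (w 2) - pderiv 2 (w 1)) + pderiv 1 (pderiv 2 (w 0) - pderiv 0 (w 2))
    + pderiv 2 (pderiv 0 (w 1) - pderiv 1 (w 0)) = 0
  simp only [map_sub]
  rw [pderiv_pderiv 0 1, pderiv_pderiv 0 2, pderiv_pderiv 1 2]
  ring

lemma divg_xmul (q : Poly3) : divg (xmul q) = C 3 * q + Ediv q := by
  show pderiv 0 (X 0 * q) + pderiv 1 (X 1 * q) + pderiv 2 (X 2 * q) = _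
  simp only [pderiv_mul, pderiv_X_self, Ediv]
  rw [show ((C 3 : Poly3)) = 1 + 1 + 1 by rw [map_ofNat]; ring]
  ring

lemma Ediv_X_mul (a : Fin 3) (p : Poly3) :
    Ediv (X a * p) = X a * p + X a * Ediv p := by
  fin_cases a <;>
  · simp [Ediv, pderiv_mul, pderiv_X, Pi.single_apply, fin3_mk0, fin3_mk1, fin3_mk2]
    ring

def crossX (u : Fin 3 → Poly3) : Fin 3 → Poly3 :=
  ![X 1 * u 2 - X 2 * u 1, X 2 * u 0 - X 0 * u 2, X 0 * u 1 - X 1 * u 0]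

lemma pcurl_crossX (u : Fin 3 → Poly3) (j : Fin 3) :
    pcurl (crossX u) j = X j * divg u - C 2 * u j - Ediv (u j) := by
  have h2 : (C 2 : Poly3) = 1 + 1 := by rw [map_ofNat]; ring
  fin_cases j <;>
  · show pderiv _ _ - pderiv _ _ = _
    show _ = _ - _ - (X 0 * pderiv 0 _ + X 1 * pderiv 1 _ + X 2 * pderiv 2 _)
    simp only [crossX, divg, Matrix.cons_val_zero, Matrix.cons_val_one, Matrix.head_cons, Matrix.cons_val_two, Matrix.tail_cons,
      fin3_mk0, fin3_mk1, fin3_mk2, map_sub, pderiv_mul, pderiv_X,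
      Pi.single_apply, h2]
    norm_num [Fin.ext_iff]
    ring

/-! ### degLE lemmas -/

lemma degLE_zero (m : ℤ) : degLE m (0 : Poly3) := Or.inl rfl

lemma degLE_mono {m m' : ℤ} (h : m ≤ m') {p : Poly3} (hp : degLE m p) : degLE m' p :=
  hp.imp id fun h' => le_trans h' h

lemma degLE_add {m : ℤ} {p q : Poly3} (hp : degLE m p) (hq : degLE m q) : degLE m (p + q) := by
  rcases hp with rfl | hp; · simpa
  rcases hq with rfl | hq; · rw [add_zero]; exact Or.inr hp
  by_cases h : p + q = 0
  · exact Or.inl h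
  · refine Or.inr ?_
    calc ((p + q).totalDegree : ℤ) ≤ (max p.totalDegree q.totalDegree : ℕ) := by
          exact_mod_cast totalDegree_add p q
    _ ≤ m := by rw [Nat.cast_max]; exact max_le hp hq

lemma degLE_neg {m : ℤ} {p : Poly3} (hp : degLE m p) : degLE m (-p) := by
  rcases hp with rfl | hp
  · simpa using degLE_zero m
  · by_cases h : -p = 0
    · exact Or.inl h
    · exact Or.inr (by rwa [totalDegree_neg])

lemma degLE_sub {m : ℤ} {p q : Poly3} (hp : degLE m p) (hq : degLE m q) : degLE m (p - q) := by
  rw [sub_eq_add_neg]; exact degLE_add hp (degLE_neg hq)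

lemma degLE_C_mul {m : ℤ} (a : ℝ) {p : Poly3} (hp : degLE m p) : degLE m (C a * p) := by
  rcases hp with rfl | hp
  · simpa using degLE_zero m
  · by_cases h : C a * p = 0
    · exact Or.inl h
    · refine Or.inr (le_trans ?_ hp)
      have := totalDegree_mul (C a) p
      rw [totalDegree_C, zero_add] at this
      exact_mod_cast this

lemma degLE_X_mul {m : ℤ} (i : Fin 3) {p : Poly3} (hp : degLE m p) :
    degLE (m + 1) (X i * p) := by
  rcases hp with rfl | hp
  · simpa using degLE_zero (m + 1)
  · by_cases h : X i * p = 0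
    · exact Or.inl h
    · refine Or.inr ?_
      have := totalDegree_mul (X i : Poly3) p
      rw [totalDegree_X] at this
      have : ((X i * p).totalDegree : ℤ) ≤ 1 + p.totalDegree := by exact_mod_cast this
      omega

lemma degLE_monomial {n : ℤ} (m : Fin 3 →₀ ℕ) (c : ℝ) (hm : (degm m : ℤ) ≤ n) :
    degLE n (monomial m c) := by
  by_cases h : (monomial m c : Poly3) = 0
  · exact Or.inl h
  · refine Or.inr (le_trans ?_ hm)
    have := totalDegree_monomial_le m c
    rw [degm_eq'] at this
    exact_mod_cast this

/-! ### linearity of pcurl / xmul -/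

lemma pcurl_apply0 (w : Fin 3 → Poly3) : pcurl w 0 = pderiv 1 (w 2) - pderiv 2 (w 1) := rfl
lemma pcurl_apply1 (w : Fin 3 → Poly3) : pcurl w 1 = pderiv 2 (w 0) - pderiv 0 (w 2) := rfl
lemma pcurl_apply2 (w : Fin 3 → Poly3) : pcurl w 2 = pderiv 0 (w 1) - pderiv 1 (w 0) := rfl

lemma pcurl_add (w w' : Fin 3 → Poly3) : pcurl (w + w') = pcurl w + pcurl w' := by
  funext j
  fin_cases j <;>
    simp only [fin3_mk0, fin3_mk1, fin3_mk2, Pi.add_apply, pcurl_apply0, pcurl_apply1,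
      pcurl_apply2, map_add] <;> ring

lemma pcurl_sub (w w' : Fin 3 → Poly3) : pcurl (w - w') = pcurl w - pcurl w' := by
  funext j
  fin_cases j <;>
    simp only [fin3_mk0, fin3_mk1, fin3_mk2, Pi.sub_apply, pcurl_apply0, pcurl_apply1,
      pcurl_apply2, map_sub] <;> ring

lemma pcurl_zero : pcurl (0 : Fin 3 → Poly3) = 0 := by
  funext j
  fin_cases j <;>
    simp [fin3_mk0, fin3_mk1, fin3_mk2, pcurl_apply0, pcurl_apply1, pcurl_apply2]

lemma pcurl_C_mul (a : ℝ) (w : Fin 3 → Poly3) (j : Fin 3) :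
    pcurl (fun i => C a * w i) j = C a * pcurl w j := by
  fin_cases j <;>
    simp only [fin3_mk0, fin3_mk1, fin3_mk2, pcurl_apply0, pcurl_apply1,
      pcurl_apply2, pderiv_C_mul] <;> ring

lemma xmul_add (q q' : Poly3) : xmul (q + q') = xmul q + xmul q' := by
  funext i; show X i * (q + q') = X i * q + X i * q'; ring

lemma xmul_zero : xmul 0 = 0 := by
  funext i; show X i * 0 = 0; ring

lemma divg_single (j : Fin 3) (p : Poly3) : divg (Pi.single j p) = pderiv j p := by
  fin_cases j <;>
  · simp [divg, Pi.single_apply, fin3_mk0, fin3_mk1, fin3_mk2]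

lemma divg_sub (v v' : Fin 3 → Poly3) : divg (v - v') = divg v - divg v' := by
  simp only [divg, Pi.sub_apply, map_sub]; ring

/-- the key curl construction for "homogeneous-like" divergence-free fields -/
lemma curl_decomp_of (u : Fin 3 → Poly3) (k : ℕ) (hdiv : divg u = 0)
    (heuler : ∀ i, Ediv (u i) = C (k : ℝ) * u i) :
    pcurl (fun i => C (-(1 / ((k : ℝ) + 2))) * crossX u i) = u := by
  funext j
  rw [pcurl_C_mul, pcurl_crossX, hdiv, heuler]
  have h1 : X j * (0 : Poly3) - C 2 * u j - C (k : ℝ) * u j = C (-((k : ℝ) + 2)) * u j := by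
    rw [map_neg, map_add]; ring
  rw [h1, ← mul_assoc, ← map_mul]
  have h2 : (-(1 / ((k : ℝ) + 2))) * (-((k : ℝ) + 2)) = 1 := by
    field_simp
  rw [h2, map_one, one_mul]

/-! ### existence -/

def Ex (n : ℕ) (v : Fin 3 → Poly3) : Prop :=
  ∃ w q, (∀ i, degLE ((n : ℤ) + 1) (w i)) ∧ degLE ((n : ℤ) - 1) q ∧ v = pcurl w + xmul q

lemma Ex_zero (n : ℕ) : Ex n 0 :=
  ⟨0, 0, fun _ => degLE_zero _, degLE_zero _, by rw [pcurl_zero, xmul_zero, add_zero]⟩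

lemma Ex_add {n : ℕ} {v v' : Fin 3 → Poly3} (h : Ex n v) (h' : Ex n v') : Ex n (v + v') := by
  obtain ⟨w, q, hw, hq, rfl⟩ := h
  obtain ⟨w', q', hw', hq', rfl⟩ := h'
  refine ⟨w + w', q + q', fun i => degLE_add (hw i) (hw' i), degLE_add hq hq', ?_⟩
  rw [pcurl_add, xmul_add]
  abel

lemma degm_sub_single {m : Fin 3 →₀ ℕ} {j : Fin 3} (h : m j ≠ 0) :
    degm (m - Finsupp.single j 1) + 1 = degm m := by
  fin_cases j <;>
  · simp only [degm, Finsupp.tsub_apply, Finsupp.single_apply, fin3_mk0, fin3_mk1, fin3_mk2] at h ⊢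
    norm_num [Fin.ext_iff]
    omega

lemma Ex_single (n : ℕ) (j : Fin 3) (m : Fin 3 →₀ ℕ) (c : ℝ) (hm : degm m ≤ n) :
    Ex n (Pi.single j (monomial m c)) := by
  set k := degm m with hk
  set s := m - Finsupp.single j 1 with hs
  set a : ℝ := c * m j / ((k : ℝ) + 2) with ha
  set q : Poly3 := monomial s a with hqdef
  set v : Fin 3 → Poly3 := Pi.single j (monomial m c) with hv
  set u : Fin 3 → Poly3 := v - xmul q with hu
  have hk2 : ((k : ℝ) + 2) ≠ 0 := by positivity
  -- degree bound for q relative to k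
  have hqd : degLE ((k : ℤ) - 1) q := by
    by_cases h0 : m j = 0
    · left; rw [hqdef, ha, h0]; push_cast; rw [mul_zero, zero_div, map_zero]
    · have hds := degm_sub_single (j := j) (m := m) h0
      exact degLE_monomial s a (by rw [← hs] at hds; omega)
  -- Euler for q
  have hEq : Ediv q = C ((degm s : ℝ)) * q := by
    rw [hqdef, Ediv_monomial, C_mul_monomial, mul_comm]
  -- divergence of u is zero
  have hdiv : divg u = 0 := by
    rw [hu, divg_sub, hv, divg_single, divg_xmul, pderiv_monomial, hEq]
    rw [← hs, hqdef, C_mul_monomial, C_mul_monomial, ← map_add, ← map_sub]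
    rw [show (0 : Poly3) = monomial s 0 from ((monomial s).map_zero).symm]
    congr 1
    by_cases h0 : m j = 0
    · rw [ha, h0]; push_cast; ring
    · have hds := degm_sub_single (j := j) (m := m) h0
      rw [← hs, ← hk] at hds
      have : (degm s : ℝ) = (k : ℝ) - 1 := by
        have : ((degm s : ℝ)) + 1 = (k : ℝ) := by exact_mod_cast congrArg (Nat.cast : ℕ → ℝ) hds
        linarith
      rw [this, ha]
      field_simp
      ring
  -- Euler for u
  have hEu : ∀ i, Ediv (u i) = C (k : ℝ) * u i := by
    intro i
    have hui : u i = v i - X i * q := rfl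
    rw [hui, Ediv_sub, Ediv_X_mul, hEq]
    by_cases h0 : m j = 0
    · have hq0 : q = 0 := by rw [hqdef, ha, h0]; push_cast; rw [mul_zero, zero_div, map_zero]
      rw [hq0]
      by_cases hij : i = j
      · subst hij
        have hvi : v i = monomial m c := by rw [hv, Pi.single_eq_same]
        rw [hvi, Ediv_monomial, ← hk]
        simp only [mul_zero, add_zero, sub_zero]
        rw [C_mul_monomial, mul_comm]
      · have hvi : v i = 0 := by rw [hv, Pi.single_eq_of_ne hij]
        rw [hvi]
        simp [Ediv]
    · have hds := degm_sub_single (j := j) (m := m) h0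
      rw [← hs, ← hk] at hds
      have hcast : (1 : Poly3) + C ((degm s : ℝ)) = C (k : ℝ) := by
        rw [← map_one (C : ℝ →+* Poly3), ← map_add]
        congr 1
        have : ((degm s : ℝ)) + 1 = (k : ℝ) := by exact_mod_cast congrArg (Nat.cast : ℕ → ℝ) hds
        linarith
      have key : X i * q + X i * (C ((degm s : ℝ)) * q) = C (k : ℝ) * (X i * q) := by
        rw [← hcast]; ring
      by_cases hij : i = j
      · subst hij
        have hvi : v i = monomial m c := by rw [hv, Pi.single_eq_same]
        rw [hvi, Ediv_monomial, ← hk, key, mul_sub, C_mul_monomial, mul_comm c ((k : ℝ))]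
      · have hvi : v i = 0 := by rw [hv, Pi.single_eq_of_ne hij]
        rw [hvi, key]
        simp only [Ediv, map_zero, mul_zero, add_zero, zero_add]
        ring
  -- assemble
  refine ⟨fun i => C (-(1 / ((k : ℝ) + 2))) * crossX u i, q, ?_, ?_, ?_⟩
  · intro i
    apply degLE_C_mul
    have hud : ∀ b, degLE (k : ℤ) (u b) := by
      intro b
      have h1 : degLE (k : ℤ) (v b) := by
        by_cases hbj : b = j
        · subst hbj; rw [hv, Pi.single_eq_same]; exact degLE_monomial m c (by omega)
        · rw [hv, Pi.single_eq_of_ne hbj]; exact degLE_zero _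
      have h2 : degLE (k : ℤ) (X b * q) := by
        have := degLE_X_mul b hqd
        rwa [sub_add_cancel] at this
      exact degLE_sub h1 h2
    have hXu : ∀ (a b : Fin 3), degLE ((n : ℤ) + 1) (X a * u b) := by
      intro a b
      refine degLE_mono ?_ (degLE_X_mul a (hud b))
      omega
    fin_cases i
    · exact degLE_sub (hXu 1 2) (hXu 2 1)
    · exact degLE_sub (hXu 2 0) (hXu 0 2)
    · exact degLE_sub (hXu 0 1) (hXu 1 0)
  · exact degLE_mono (by omega) hqd
  · rw [curl_decomp_of u k hdiv hEu, hu]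
    funext i
    show v i = v i - X i * q + X i * q
    ring

lemma xmul_sub (q q' : Poly3) : xmul (q - q') = xmul q - xmul q' := by
  funext i; show X i * (q - q') = X i * q - X i * q'; ring

lemma q_eq_zero_of_pcurl_eq_xmul {W : Fin 3 → Poly3} {Q : Poly3}
    (h : pcurl W = xmul Q) : Q = 0 := by
  have h1 : divg (xmul Q) = 0 := by rw [← h, divg_pcurl]
  rw [divg_xmul] at h1
  exact eq_zero_of_three_add_Ediv h1


/-- `[P_n(ℝ³)]³ = curl([P_{n+1}]³) ⊕ x · P_{n-1}`: every vector polynomial of degree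
at most `n` decomposes uniquely as a sum of a curl of a vector polynomial of degree
at most `n+1` and `x` times a scalar polynomial of degree at most `n-1`. -/
theorem poly_decomposition_curl_x (n : ℕ) (v : Fin 3 → Poly3)
    (hv : ∀ i, degLE (n : ℤ) (v i)) :
    ∃! gc : (Fin 3 → Poly3) × (Fin 3 → Poly3),
      (∃ w : Fin 3 → Poly3, (∀ i, degLE ((n : ℤ) + 1) (w i)) ∧ gc.1 = pcurl w) ∧
      (∃ q : Poly3, degLE ((n : ℤ) - 1) q ∧ gc.2 = xmul q) ∧
      v = gc.1 + gc.2 := by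

  have hex : Ex n v := by
    have h1 : ∀ j : Fin 3, (Pi.single j (v j) : Fin 3 → Poly3)
        = ∑ m ∈ (v j).support, (Pi.single j (monomial m (coeff m (v j))) : Fin 3 → Poly3) := by
      intro j
      funext i
      rw [Finset.sum_apply]
      by_cases hij : i = j
      · subst hij
        rw [Pi.single_eq_same]
        conv_lhs => rw [← support_sum_monomial_coeff (v i)]
        exact Finset.sum_congr rfl fun m _ =>
          (Pi.single_eq_same (M := fun _ : Fin 3 => Poly3) i _).symm
      · rw [Pi.single_eq_of_ne hij]
        exact (Finset.sum_eq_zero fun m _ =>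
          Pi.single_eq_of_ne (M := fun _ : Fin 3 => Poly3) hij _).symm
    have hv' : v = ∑ j : Fin 3, ∑ m ∈ (v j).support,
        Pi.single j (monomial m (coeff m (v j))) := by
      conv_lhs => rw [← Finset.univ_sum_single v]
      exact Finset.sum_congr rfl fun j _ => h1 j
    rw [hv']
    refine Finset.sum_induction _ (Ex n) (fun a b ha hb => Ex_add ha hb) (Ex_zero n) ?_
    intro j _
    refine Finset.sum_induction _ (Ex n) (fun a b ha hb => Ex_add ha hb) (Ex_zero n) ?_
    intro m hm
    apply Ex_single
    rcases hv j with h0 | h0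
    · rw [h0] at hm; simp at hm
    · have := MvPolynomial.le_totalDegree hm
      rw [degm_eq] at this
      have h2 : ((v j).totalDegree : ℤ) ≤ n := h0
      omega
  obtain ⟨w₀, q₀, hw₀, hq₀, hd⟩ := hex
  refine ⟨⟨pcurl w₀, xmul q₀⟩, ⟨⟨w₀, hw₀, rfl⟩, ⟨q₀, hq₀, rfl⟩, hd⟩, ?_⟩
  rintro ⟨g, c⟩ ⟨⟨w', hw', rfl⟩, ⟨q', hq', rfl⟩, hd'⟩
  have hkey : pcurl (w' - w₀) = xmul (q₀ - q') := by
    rw [pcurl_sub, xmul_sub]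
    have : pcurl w₀ + xmul q₀ = pcurl w' + xmul q' := by rw [← hd, ← hd']
    rw [sub_eq_sub_iff_add_eq_add]
    linear_combination (norm := abel) this.symm
  have hq0 : q₀ - q' = 0 := q_eq_zero_of_pcurl_eq_xmul hkey
  have hq : q' = q₀ := (sub_eq_zero.mp hq0).symm
  have h2 : pcurl w₀ + xmul q₀ = pcurl w' + xmul q' := hd.symm.trans hd'
  rw [hq] at h2
  have hg : pcurl w' = pcurl w₀ := (add_right_cancel h2).symm
  rw [hg, hq]
end
end

section
/- A vector polynomial in [P_n(ℝ³)]³ has zero curl if and only if it is the gradient of a scalar polynomial of degree at most n+1. -/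
open MvPolynomial

noncomputable section

/-- Gradient of a scalar polynomial. -/
def pgrad (q : Poly3) : Fin 3 → Poly3 := fun i => pderiv i q

namespace PcurlAux

/-- total degree of a multi-index -/
def D (m : Fin 3 →₀ ℕ) : ℕ := m 0 + m 1 + m 2

lemma coeff_pderiv (i : Fin 3) (p : Poly3) (m : Fin 3 →₀ ℕ) :
    coeff m (pderiv i p) = (m i + 1 : ℝ) * coeff (m + Finsupp.single i 1) p := by
  conv_lhs => rw [p.as_sum]
  rw [map_sum, MvPolynomial.coeff_sum]
  rw [Finset.sum_congr rfl (fun s _ => by rw [pderiv_monomial, coeff_monomial])]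
  rw [Finset.sum_eq_single (m + Finsupp.single i 1)]
  · rw [if_pos (add_tsub_cancel_right ..)]
    simp [mul_comm]
  · intro s hs hne
    split_ifs with h
    · rcases Nat.eq_zero_or_pos (s i) with h0 | h0
      · simp [h0]
      · exact absurd (by rw [← h, tsub_add_cancel_of_le (Finsupp.single_le_iff.mpr h0)]) hne
    · rfl
  · intro h
    rw [if_pos (add_tsub_cancel_right ..), MvPolynomial.notMem_support_iff.mp h, zero_mul]

lemma pderiv_comm (i j : Fin 3) (q : Poly3) :
    pderiv i (pderiv j q) = pderiv j (pderiv i q) := by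
  apply MvPolynomial.ext
  intro m
  rw [coeff_pderiv, coeff_pderiv, coeff_pderiv, coeff_pderiv]
  rw [show m + Finsupp.single i 1 + Finsupp.single j 1
      = m + Finsupp.single j 1 + Finsupp.single i 1 by
    rw [add_assoc, add_assoc, add_comm (Finsupp.single i 1)]]
  rcases eq_or_ne i j with rfl | hij
  · ring
  · rw [Finsupp.add_apply, Finsupp.add_apply, Finsupp.single_apply, Finsupp.single_apply,
      if_neg hij, if_neg (Ne.symm hij)]
    ring

/-- The "homotopy" scaling operator: divide each monomial by its degree. -/
def S (p : Poly3) : Poly3 :=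
  ∑ m ∈ p.support, monomial m (coeff m p / (D m : ℝ))

lemma coeff_S (p : Poly3) (a : Fin 3 →₀ ℕ) :
    coeff a (S p) = coeff a p / (D a : ℝ) := by
  rw [S, MvPolynomial.coeff_sum]
  rw [Finset.sum_eq_single a]
  · rw [coeff_monomial, if_pos rfl]
  · intro m _ hne
    rw [coeff_monomial, if_neg hne]
  · intro h
    rw [MvPolynomial.notMem_support_iff.mp h, coeff_monomial, if_pos rfl, zero_div]

lemma totalDegree_S_le (p : Poly3) : (S p).totalDegree ≤ p.totalDegree := by
  refine (totalDegree_finset_sum _ _).trans (Finset.sup_le fun m hm => ?_)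
  exact (totalDegree_monomial_le _ _).trans (le_totalDegree hm)

end PcurlAux

set_option maxHeartbeats 1000000 in
open PcurlAux in
/-- A vector polynomial in `[P_n(ℝ³)]³` is curl-free iff it is the gradient of a scalar
polynomial of degree at most `n+1`. -/
theorem pcurl_eq_zero_iff_gradient (n : ℕ) (v : Fin 3 → Poly3)
    (hv : ∀ i, (v i).totalDegree ≤ n) :
    pcurl v = 0 ↔ ∃ q : Poly3, q.totalDegree ≤ n + 1 ∧ v = pgrad q := by
  constructor
  · intro h
    have h0 : pderiv 1 (v 2) = pderiv 2 (v 1) := by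
      have := congrFun h 0
      simp [pcurl] at this
      linear_combination (norm := abel) this
    have h1 : pderiv 2 (v 0) = pderiv 0 (v 2) := by
      have := congrFun h 1
      simp [pcurl] at this
      linear_combination (norm := abel) this
    have h2 : pderiv 0 (v 1) = pderiv 1 (v 0) := by
      have := congrFun h 2
      simp [pcurl] at this
      linear_combination (norm := abel) this
    have comm : ∀ i j : Fin 3, pderiv i (v j) = pderiv j (v i) := by
      intro i j
      fin_cases i <;> fin_cases j <;>
        first | rfl | exact h0 | exact h0.symm | exact h1 | exact h1.symm
              | exact h2 | exact h2.symm
    have key : ∀ (i j : Fin 3) (b : Fin 3 →₀ ℕ),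
        (b i + 1 : ℝ) * coeff (b + Finsupp.single i 1) (v j)
          = (b j + 1 : ℝ) * coeff (b + Finsupp.single j 1) (v i) := by
      intro i j b
      rw [← coeff_pderiv, ← coeff_pderiv, comm]
    set w : Poly3 := X 0 * v 0 + X 1 * v 1 + X 2 * v 2 with hw
    refine ⟨S w, ?_, ?_⟩
    · refine (totalDegree_S_le w).trans ?_
      have hXv : ∀ i : Fin 3, (X i * v i).totalDegree ≤ n + 1 := fun i =>
        (totalDegree_mul _ _).trans (by
          simpa [totalDegree_X, add_comm] using add_le_add_left (hv i) 1)
      exact (totalDegree_add _ _).trans (max_le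
        ((totalDegree_add _ _).trans (max_le (hXv 0) (hXv 1))) (hXv 2))
    · funext j
      apply MvPolynomial.ext
      intro m
      show coeff m (v j) = coeff m (pderiv j (S w))
      rw [coeff_pderiv, coeff_S]
      have hDm : (D (m + Finsupp.single j 1) : ℝ) = (D m : ℝ) + 1 := by
        fin_cases j <;>
          · simp only [D, Finsupp.add_apply, Finsupp.single_apply]
            push_cast
            norm_num
            ring
      have term : ∀ i : Fin 3,
          (m j + 1 : ℝ) * coeff (m + Finsupp.single j 1) (X i * v i)
            = ((m i : ℝ) + if i = j then 1 else 0) * coeff m (v j) := by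
        intro i
        rcases eq_or_ne i j with rfl | hij
        · rw [add_comm m, coeff_X_mul, if_pos rfl]
        · rw [if_neg hij, add_zero, coeff_X_mul']
          rcases Nat.eq_zero_or_pos (m i) with h0 | h0
          · rw [if_neg, h0]
            · simp
            · simp [Finsupp.single_apply, if_neg (Ne.symm hij), h0]
          · rw [if_pos]
            · set b : Fin 3 →₀ ℕ := m - Finsupp.single i 1 with hb
              have hbm : b + Finsupp.single i 1 = m := by
                rw [hb, tsub_add_cancel_of_le (Finsupp.single_le_iff.mpr h0)]
              have hsub : m + Finsupp.single j 1 - Finsupp.single i 1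
                  = b + Finsupp.single j 1 := by
                rw [← hbm]
                rw [add_right_comm, add_tsub_cancel_right]
              rw [hsub]
              have hk := key j i b
              have hbj : b j = m j := by
                rw [← hbm]
                simp [Finsupp.single_apply, if_neg hij]
              have hbi : (b i : ℝ) + 1 = m i := by
                have : b i + 1 = m i := by
                  rw [← hbm]; simp
                exact_mod_cast this
              rw [hbj, hbm] at hk
              rw [hk, hbi]
            · simp only [Finsupp.mem_support_iff, Finsupp.add_apply,
                Finsupp.single_apply, if_neg (Ne.symm hij)]
              omega
      have hsum : (m j + 1 : ℝ) * coeff (m + Finsupp.single j 1) w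
          = ((D m : ℝ) + 1) * coeff m (v j) := by
        rw [hw]
        simp only [coeff_add, mul_add]
        rw [term 0, term 1, term 2]
        have : ((m 0 : ℝ) + if (0:Fin 3) = j then 1 else 0)
            + ((m 1 : ℝ) + if (1:Fin 3) = j then 1 else 0)
            + ((m 2 : ℝ) + if (2:Fin 3) = j then 1 else 0) = (D m : ℝ) + 1 := by
          fin_cases j <;> simp [D] <;> push_cast <;> ring
        rw [← add_mul, ← add_mul, this]
      have hD1 : ((D m : ℝ) + 1) ≠ 0 := by positivity
      rw [hDm, ← mul_div_assoc, hsum, mul_div_cancel_left₀ _ hD1]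
  · rintro ⟨q, _, rfl⟩
    funext i
    fin_cases i <;>
      simp [pcurl, pgrad, pderiv_comm]
end
end

section
/- The dimension of the space of divergence-free vector polynomials of degree at most k-3 in three variables equals 3·π_{k-2,3} - π_{k-1,3} + 1, where π_{m,3} = (m+1)(m+2)(m+3)/6 is the dimension of P_m(ℝ³). -/
open MvPolynomial

noncomputable section

/-- The space `P_m(ℝ³)` of scalar polynomials of total degree at most `m`,
with `P_m = {0}` for `m < 0`. -/
def PZ (m : ℤ) : Submodule ℝ Poly3 :=
  if 0 ≤ m then restrictTotalDegree (Fin 3) ℝ m.toNat else ⊥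

/-- The space `[P_m(ℝ³)]³` of vector polynomials with components of degree at most `m`. -/
def VZ (m : ℤ) : Submodule ℝ (Fin 3 → Poly3) :=
  Submodule.pi Set.univ fun _ => PZ m

/-- The divergence, as a linear map on vector polynomials. -/
def pdivL : (Fin 3 → Poly3) →ₗ[ℝ] Poly3 :=
  ∑ i : Fin 3, (pderiv i).toLinearMap ∘ₗ LinearMap.proj i

/-! ### Counting: see a.lean, inserted -/
section COUNT
def eqv1 (n : ℕ) :
    {d : Fin 3 →₀ ℕ // (d.sum fun _ e => e) ≤ n} ≃ {v : Fin 3 → ℕ // ∑ i, v i ≤ n} :=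
  Finsupp.equivFunOnFinite.subtypeEquiv (fun d => by
    rw [Finsupp.sum_fintype]; · rfl
    · intro i; rfl)

def eqv2 (n : ℕ) : {v : Fin 3 → ℕ // ∑ i, v i ≤ n} ≃ {w : Fin 4 → ℕ // ∑ i, w i = n} where
  toFun v := ⟨Fin.cons (n - ∑ i, v.1 i) v.1, by rw [Fin.sum_cons]; omega⟩
  invFun w := ⟨Fin.tail w.1, by
    have := w.2; rw [Fin.sum_univ_succ] at this
    simp only [Fin.tail]; omega⟩
  left_inv v := by apply Subtype.ext; simp [Fin.tail_cons]
  right_inv w := by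
    apply Subtype.ext
    have h2 := w.2; rw [Fin.sum_univ_succ] at h2
    have h0 : n - ∑ i, Fin.tail w.1 i = w.1 0 := by simp only [Fin.tail]; omega
    show Fin.cons (n - ∑ i, Fin.tail w.1 i) (Fin.tail w.1) = w.1
    rw [h0, Fin.cons_self_tail]

def eqv3 (n : ℕ) : {w : Fin 4 → ℕ // ∑ i, w i = n} ≃ {g : Fin 4 →₀ ℕ // (g.sum fun _ e => e) = n} :=
  (Finsupp.equivFunOnFinite.subtypeEquiv (fun g => by
    rw [Finsupp.sum_fintype]; · rfl
    · intro i; rfl)).symm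

def eqv4 (n : ℕ) : {g : Fin 4 →₀ ℕ // (g.sum fun _ e => e) = n} ≃ Sym (Fin 4) n :=
  Finsupp.orderIsoMultiset.toEquiv.subtypeEquiv (fun g => by
    show (g.sum fun _ e => e) = n ↔ Multiset.card g.toMultiset = n
    rw [Finsupp.card_toMultiset]; rfl)

def degLeEquiv (n : ℕ) :
    {d : Fin 3 →₀ ℕ // (d.sum fun _ e => e) ≤ n} ≃ Sym (Fin 4) n :=
  ((eqv1 n).trans (eqv2 n)).trans ((eqv3 n).trans (eqv4 n))

lemma card_degLe (n : ℕ) [Fintype {d : Fin 3 →₀ ℕ // (d.sum fun _ e => e) ≤ n}] :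
    Fintype.card {d : Fin 3 →₀ ℕ // (d.sum fun _ e => e) ≤ n} = (n + 3).choose 3 := by
  rw [Fintype.card_congr (degLeEquiv n), Sym.card_sym_eq_choose, Fintype.card_fin]
  have h : 4 + n - 1 = n + 3 := by omega
  have hs := Nat.choose_symm (show n ≤ n + 3 by omega)
  have h2 : n + 3 - n = 3 := by omega
  rw [h, ← hs, h2]

lemma finrank_RTD (n : ℕ) :
    Module.finrank ℝ (restrictTotalDegree (Fin 3) ℝ n) = (n + 3).choose 3 := by
  haveI : Fintype {d : Fin 3 →₀ ℕ // (d.sum fun _ e => e) ≤ n} :=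
    Fintype.ofEquiv _ (degLeEquiv n).symm
  have b : Module.Basis {d : Fin 3 →₀ ℕ // (d.sum fun _ e => e) ≤ n} ℝ
      (restrictTotalDegree (Fin 3) ℝ n) :=
    MvPolynomial.basisRestrictSupport ℝ _
  rw [Module.finrank_eq_card_basis b, card_degLe]
end COUNT

/-! ### Derivatives and degrees -/
section DERIV
lemma td_pderiv {p : MvPolynomial (Fin 3) ℝ} {n : ℕ} (i : Fin 3)
    (h : p.totalDegree ≤ n + 1) : ((pderiv i) p).totalDegree ≤ n := by
  conv_lhs => rw [p.as_sum]
  rw [map_sum]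
  refine (totalDegree_finset_sum _ _).trans (Finset.sup_le fun d hd => ?_)
  rw [pderiv_monomial]
  rcases Nat.eq_zero_or_pos (d i) with h0 | h0
  · simp [h0]
  · refine (totalDegree_monomial_le _ _).trans ?_
    have hdeg : (d.sum fun _ e => e) ≤ n + 1 :=
      le_trans (Finset.le_sup (f := fun d => d.sum fun _ e => e) hd) h
    rw [Finsupp.sum_fintype _ _ (fun _ => rfl)] at hdeg ⊢
    simp only [Finsupp.tsub_apply]
    have hi0 := h0
    fin_cases i <;>
      simp only [Fin.sum_univ_three, Finsupp.single_apply] at hdeg ⊢ <;>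
      simp_all <;> omega

lemma pderiv_eq_zero_of_td {p : MvPolynomial (Fin 3) ℝ} (i : Fin 3)
    (h : p.totalDegree = 0) : (pderiv i) p = 0 := by
  conv_lhs => rw [p.as_sum]
  rw [map_sum]
  refine Finset.sum_eq_zero fun d hd => ?_
  rw [pderiv_monomial]
  have := (totalDegree_eq_zero_iff _ p).mp h d hd i
  simp [this]

lemma exists_antideriv {g : MvPolynomial (Fin 3) ℝ} {n : ℕ} (h : g.totalDegree ≤ n) :
    ∃ h' : MvPolynomial (Fin 3) ℝ, h'.totalDegree ≤ n + 1 ∧ (pderiv 0) h' = g := by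
  refine ⟨∑ d ∈ g.support, monomial (d + Finsupp.single 0 1) (coeff d g / (d 0 + 1)), ?_, ?_⟩
  · refine (totalDegree_finset_sum _ _).trans (Finset.sup_le fun d hd => ?_)
    refine (totalDegree_monomial_le _ _).trans ?_
    have hdeg : (d.sum fun _ e => e) ≤ n :=
      le_trans (Finset.le_sup (f := fun d => d.sum fun _ e => e) hd) h
    rw [Finsupp.sum_add_index (by simp) (by intros; rfl)]
    rw [Finsupp.sum_single_index rfl]
    simp only [Function.id_def, id_eq] at hdeg ⊢
    omega
  · rw [map_sum]
    conv_rhs => rw [g.as_sum]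
    refine Finset.sum_congr rfl fun d hd => ?_
    rw [pderiv_monomial]
    have h1 : (d + Finsupp.single 0 1) - Finsupp.single 0 1 = d := by
      ext j; simp [Finsupp.tsub_apply]
    have h2 : ((d + Finsupp.single 0 1) : Fin 3 →₀ ℕ) 0 = d 0 + 1 := by simp
    rw [h1, h2]
    congr 1
    push_cast
    field_simp
end DERIV

/-! ### Structure of PZ and VZ -/
lemma mem_PZ (n : ℕ) (p : Poly3) : p ∈ PZ (n : ℤ) ↔ p.totalDegree ≤ n := by
  simp [PZ, mem_restrictTotalDegree]

lemma PZ_neg {m : ℤ} (h : m < 0) : PZ m = ⊥ := by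
  simp [PZ, not_le.mpr h]

instance PZ_fd (m : ℤ) : FiniteDimensional ℝ (PZ m) := by
  rcases le_or_gt 0 m with h | h
  · rw [PZ, if_pos h]; infer_instance
  · rw [PZ, if_neg (not_le.mpr h)]; infer_instance

def VZequiv (m : ℤ) : VZ m ≃ₗ[ℝ] (Fin 3 → PZ m) where
  toFun x i := ⟨x.1 i, x.2 i (Set.mem_univ i)⟩
  map_add' _ _ := rfl
  map_smul' _ _ := rfl
  invFun y := ⟨fun i => (y i).1, fun i _ => (y i).2⟩
  left_inv _ := rfl
  right_inv _ := rfl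

instance VZ_fd (m : ℤ) : FiniteDimensional ℝ (VZ m) :=
  Module.Finite.equiv (VZequiv m).symm

lemma finrank_VZ (m : ℤ) :
    Module.finrank ℝ (VZ m) = 3 * Module.finrank ℝ (PZ m) := by
  haveI : Module.Free ℝ (PZ m) := Module.Free.of_divisionRing ℝ (PZ m)
  rw [(VZequiv m).finrank_eq, Module.finrank_pi_fintype]
  simp [Finset.sum_const]

lemma pdivL_apply (v : Fin 3 → Poly3) :
    pdivL v = pderiv 0 (v 0) + pderiv 1 (v 1) + pderiv 2 (v 2) := by
  simp [pdivL, Fin.sum_univ_three]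

lemma finrank_PZ_nat (n : ℕ) :
    Module.finrank ℝ (PZ (n : ℤ)) = (n + 3).choose 3 := by
  rw [show PZ (n : ℤ) = restrictTotalDegree (Fin 3) ℝ n by simp [PZ], finrank_RTD]

lemma finrank_PZ_pred (n : ℕ) :
    Module.finrank ℝ (PZ ((n : ℤ) - 1)) = (n + 2).choose 3 := by
  cases n with
  | zero => rw [PZ_neg (by norm_num)]; simp [finrank_bot]
  | succ m =>
    have h : ((m + 1 : ℕ) : ℤ) - 1 = (m : ℤ) := by push_cast; ring
    rw [h, finrank_PZ_nat]

lemma six_choose (n : ℕ) : 6 * (n + 3).choose 3 = (n + 1) * (n + 2) * (n + 3) := by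
  have h := Nat.choose_mul_factorial_mul_factorial (show 3 ≤ n + 3 by omega)
  have h3 : (3 : ℕ).factorial = 6 := rfl
  have hnn : n + 3 - 3 = n := by omega
  rw [h3, hnn] at h
  have f1 : (n + 3).factorial = (n + 3) * (n + 2).factorial := Nat.factorial_succ (n + 2)
  have f2 : (n + 2).factorial = (n + 2) * (n + 1).factorial := Nat.factorial_succ (n + 1)
  have f3 : (n + 1).factorial = (n + 1) * n.factorial := Nat.factorial_succ n
  rw [f1, f2, f3] at h
  have hc : (6 * (n + 3).choose 3) * n.factorial
      = ((n + 1) * (n + 2) * (n + 3)) * n.factorial := by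
    rw [show (6 * (n + 3).choose 3) * n.factorial
      = (n + 3).choose 3 * 6 * n.factorial by ring, h]
    ring
  exact Nat.eq_of_mul_eq_mul_right (Nat.factorial_pos n) hc


/-- For `k ≥ 2`, the dimension of the space of divergence-free vector polynomials of
degree at most `k-3` equals `3·π_{k-2,3} - π_{k-1,3} + 1`, where
`π_{m,3} = dim P_m(ℝ³) = binom(m+3,3)`. -/
theorem dim_divfree_polys (k : ℕ) (hk : 2 ≤ k) :
    (Module.finrank ℝ ↥(VZ ((k : ℤ) - 3) ⊓ LinearMap.ker pdivL) : ℤ)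
      = 3 * Nat.choose (k - 2 + 3) 3 - Nat.choose (k - 1 + 3) 3 + 1 := by
  rcases eq_or_lt_of_le hk with hk2 | hk3
  · -- k = 2
    subst hk2
    have hP : PZ ((2 : ℕ) - 3 : ℤ) = ⊥ := PZ_neg (by norm_num)
    have hV : VZ ((2 : ℕ) - 3 : ℤ) = ⊥ := by
      rw [eq_bot_iff]
      intro x hx
      rw [VZ] at hx
      have : ∀ i, x i = 0 := fun i => by
        have h := Submodule.mem_pi.mp hx i (Set.mem_univ i)
        rwa [hP, Submodule.mem_bot] at h
      exact funext this
    rw [hV, bot_inf_eq, finrank_bot]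
    decide
  · -- k ≥ 3
    obtain ⟨n, rfl⟩ : ∃ n, k = n + 3 := ⟨k - 3, by omega⟩
    have hcast : ((n + 3 : ℕ) : ℤ) - 3 = (n : ℤ) := by push_cast; ring
    rw [hcast]
    -- the restricted divergence map
    have hmap : ∀ v ∈ VZ (n : ℤ), pdivL v ∈ PZ ((n : ℤ) - 1) := by
      intro v hv
      have hd : ∀ i : Fin 3, (v i).totalDegree ≤ n := fun i =>
        (mem_PZ n (v i)).mp (hv i (Set.mem_univ i))
      rw [pdivL_apply]
      cases n with
      | zero =>
        rw [PZ_neg (by norm_num), Submodule.mem_bot]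
        rw [pderiv_eq_zero_of_td _ (Nat.le_zero.mp (hd 0)),
          pderiv_eq_zero_of_td _ (Nat.le_zero.mp (hd 1)),
          pderiv_eq_zero_of_td _ (Nat.le_zero.mp (hd 2))]
        ring
      | succ m =>
        have h : ((m + 1 : ℕ) : ℤ) - 1 = (m : ℤ) := by push_cast; ring
        rw [h, mem_PZ]
        have b0 := td_pderiv (0 : Fin 3) (hd 0)
        have b1 := td_pderiv (1 : Fin 3) (hd 1)
        have b2 := td_pderiv (2 : Fin 3) (hd 2)
        exact le_trans (totalDegree_add _ _)
          (max_le (le_trans (totalDegree_add _ _) (max_le b0 b1)) b2)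
    set f := pdivL.restrict hmap with hf
    -- surjectivity
    have hrange : LinearMap.range f = ⊤ := by
      rw [LinearMap.range_eq_top]
      rintro ⟨q, hq⟩
      cases n with
      | zero =>
        refine ⟨0, Subtype.ext ?_⟩
        have : q = 0 := by
          rw [PZ_neg (by norm_num), Submodule.mem_bot] at hq
          exact hq
        simp [hf, LinearMap.restrict_apply, this]
      | succ m =>
        have h : ((m + 1 : ℕ) : ℤ) - 1 = (m : ℤ) := by push_cast; ring
        rw [h, mem_PZ] at hq
        obtain ⟨h', hdeg, hder⟩ := exists_antideriv hq
        refine ⟨⟨![h', 0, 0], ?_⟩, Subtype.ext ?_⟩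
        · intro i _
          fin_cases i
          · show h' ∈ PZ ((m + 1 : ℕ) : ℤ)
            exact (mem_PZ _ _).mpr hdeg
          · show (0 : Poly3) ∈ PZ ((m + 1 : ℕ) : ℤ)
            exact Submodule.zero_mem _
          · show (0 : Poly3) ∈ PZ ((m + 1 : ℕ) : ℤ)
            exact Submodule.zero_mem _
        · rw [hf, LinearMap.restrict_apply]
          show pdivL ![h', 0, 0] = q
          rw [pdivL_apply]
          simp [hder]
    -- kernel identification
    have hker : Module.finrank ℝ ↥(VZ (n : ℤ) ⊓ LinearMap.ker pdivL)
        = Module.finrank ℝ (LinearMap.ker f) := by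
      have h1 : LinearMap.ker f = Submodule.comap (VZ (n : ℤ)).subtype (LinearMap.ker pdivL) := by
        rw [hf, LinearMap.ker_restrict]
      rw [h1, ← Submodule.finrank_map_subtype_eq (VZ (n : ℤ)), Submodule.map_comap_subtype]
    -- rank-nullity
    have hrn := LinearMap.finrank_range_add_finrank_ker f
    rw [hrange, finrank_top, finrank_PZ_pred, finrank_VZ, finrank_PZ_nat, ← hker] at hrn
    -- arithmetic
    have e1 : n + 3 - 2 + 3 = n + 4 := by omega
    have e2 : n + 3 - 1 + 3 = n + 5 := by omega
    rw [e1, e2]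
    have h2 : 6 * (n + 2).choose 3 = n * (n + 1) * (n + 2) := by
      cases n with
      | zero => decide
      | succ m => exact six_choose m
    have h3 := six_choose n
    have h4 := six_choose (n + 1)
    have h5 := six_choose (n + 2)
    have hz2 : (6 : ℤ) * ((n + 2).choose 3 : ℤ) = n * (n + 1) * (n + 2) := by exact_mod_cast h2
    have hz3 : (6 : ℤ) * ((n + 3).choose 3 : ℤ) = (n + 1) * (n + 2) * (n + 3) := by exact_mod_cast h3
    have hz4 : (6 : ℤ) * ((n + 4).choose 3 : ℤ) = (n + 2) * (n + 3) * (n + 4) := by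
      have := h4; push_cast [show n + 1 + 3 = n + 4 from rfl] at this ⊢; linarith [this]
    have hz5 : (6 : ℤ) * ((n + 5).choose 3 : ℤ) = (n + 3) * (n + 4) * (n + 5) := by
      have := h5; push_cast [show n + 2 + 3 = n + 5 from rfl] at this ⊢; linarith [this]
    have hzE : ((n + 2).choose 3 : ℤ)
        + (Module.finrank ℝ ↥(VZ (n : ℤ) ⊓ LinearMap.ker pdivL) : ℤ)
        = 3 * ((n + 3).choose 3 : ℤ) := by exact_mod_cast hrn
    have key : (6 : ℤ) * (Module.finrank ℝ ↥(VZ (n : ℤ) ⊓ LinearMap.ker pdivL) : ℤ)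
        = 6 * (3 * ((n + 4).choose 3 : ℤ) - ((n + 5).choose 3 : ℤ) + 1) := by
      linear_combination 6 * hzE - hz2 + 3 * hz3 - 3 * hz4 + hz5
    linarith
end
end

section
/- Let n ≥ 1. Every scalar polynomial in P_{n-1}(ℝ³) with zero mean over a bounded domain P ⊂ ℝ³ (of positive measure) is the divergence of some vector polynomial in [P_n(ℝ³)]³; consequently, dim{q ∈ P_{n-1} : ∫_P q = 0} = π_{n-1,3} - 1 and the divergence map from [P_n]³ to P_{n-1} ∩ L²₀(P) restricted appropriately is surjective. -/
open MvPolynomial MeasureTheory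

noncomputable section

/-- Divergence of a vector polynomial. -/
def pdiv (v : Fin 3 → Poly3) : Poly3 := ∑ i, pderiv i (v i)

/-- The subspace of scalar polynomials of degree at most `m` with zero mean over a
bounded set `P`. -/
def zeroMeanPolys (P : Set (Fin 3 → ℝ)) (hPb : Bornology.IsBounded P) (m : ℕ) :
    Submodule ℝ Poly3 where
  carrier := {q | q ∈ restrictTotalDegree (Fin 3) ℝ m ∧ ∫ x in P, eval x q = 0}
  add_mem' := by
    rintro q₁ q₂ ⟨h₁d, h₁i⟩ ⟨h₂d, h₂i⟩
    refine ⟨Submodule.add_mem _ h₁d h₂d, ?_⟩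
    have int : ∀ q : Poly3, IntegrableOn (fun x => eval x q) P volume := fun q =>
      ((MvPolynomial.continuous_eval q).continuousOn.integrableOn_compact
        hPb.isCompact_closure).mono_set subset_closure
    simp only [map_add]
    rw [integral_add (int q₁) (int q₂), h₁i, h₂i, add_zero]
  zero_mem' := ⟨Submodule.zero_mem _, by simp⟩
  smul_mem' := by
    rintro c q ⟨hd, hi⟩
    refine ⟨Submodule.smul_mem _ c hd, ?_⟩
    simp only [smul_eq_C_mul, map_mul, eval_C]
    rw [integral_const_mul, hi, mul_zero]

/- ### Auxiliary material: antiderivative along the first variable -/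

abbrev e01 : Fin 3 →₀ ℕ := Finsupp.single 0 1

lemma pderiv_mono_aux (d : Fin 3 →₀ ℕ) (c : ℝ) :
    pderiv 0 (monomial (d + e01) (c / (d 0 + 1))) = monomial d c := by
  rw [pderiv_monomial]
  have h1 : (d + e01) - Finsupp.single 0 1 = d := by
    ext i; simp [e01, Finsupp.single_apply]
  have h2 : (d + e01) 0 = d 0 + 1 := by simp [e01]
  rw [h1, h2]
  congr 1
  push_cast
  field_simp

def antideriv (q : Poly3) : Poly3 :=
  q.support.sum (fun d => monomial (d + e01) (q.coeff d / (d 0 + 1)))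

lemma pderiv_antideriv (q : Poly3) : pderiv 0 (antideriv q) = q := by
  rw [antideriv, map_sum]
  conv_rhs => rw [q.as_sum]
  exact Finset.sum_congr rfl fun d _ => pderiv_mono_aux d _

lemma antideriv_degree (q : Poly3) :
    (antideriv q).totalDegree ≤ q.totalDegree + 1 := by
  refine (totalDegree_finset_sum _ _).trans (Finset.sup_le fun d hd => ?_)
  refine (totalDegree_monomial_le _ _).trans ?_
  have h : ((d + e01).sum fun _ => id) = (d.sum fun _ => id) + 1 := by
    rw [Finsupp.sum_add_index (by simp) (by simp)]
    simp [e01]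
  rw [h]
  exact Nat.add_le_add_right (le_totalDegree hd) 1

/- ### Auxiliary material: counting monomials of degree at most `m` in 3 variables -/

def slackEquiv (m : ℕ) : {f : Fin 4 → ℕ // ∑ i, f i = m} ≃ {f : Fin 3 → ℕ // ∑ i, f i ≤ m} where
  toFun g := ⟨fun i => g.1 i.castSucc, by
    show (∑ i : Fin 3, g.1 i.castSucc) ≤ m
    have := g.2
    rw [Fin.sum_univ_castSucc] at this
    omega⟩
  invFun f := ⟨Fin.snoc f.1 (m - ∑ i, f.1 i), by
    have := f.2
    rw [Fin.sum_univ_castSucc]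
    simp only [Fin.snoc_castSucc, Fin.snoc_last]
    omega⟩
  left_inv g := by
    ext i
    refine Fin.lastCases ?_ (fun j => ?_) i
    · have := g.2
      rw [Fin.sum_univ_castSucc] at this
      simp only [Fin.snoc_last]
      omega
    · simp [Fin.snoc_castSucc]
  right_inv f := by
    ext i
    simp [Fin.snoc_castSucc]

def countEquiv (m : ℕ) :
    {d : Fin 3 →₀ ℕ // (d.sum fun _ e => e) ≤ m} ≃ Sym (Fin 4) m :=
  ((Finsupp.equivFunOnFinite.subtypeEquiv (by
      intro d
      rw [Finsupp.sum_fintype _ _ (fun _ => rfl)]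
      rfl)).trans (slackEquiv m).symm).trans (Sym.equivNatSumOfFintype (Fin 4) m).symm

lemma card_count (m : ℕ) :
    Nat.card {d : Fin 3 →₀ ℕ // (d.sum fun _ e => e) ≤ m} = Nat.choose (m + 3) 3 := by
  rw [Nat.card_congr (countEquiv m), Nat.card_eq_fintype_card, Sym.card_sym_eq_choose]
  have h4 : Fintype.card (Fin 4) = 4 := by simp
  rw [h4]
  have : 4 + m - 1 = m + 3 := by omega
  rw [this, ← Nat.choose_symm (by omega : 3 ≤ m + 3)]
  congr 1

lemma finrank_restrict (m : ℕ) :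
    Module.finrank ℝ (restrictTotalDegree (Fin 3) ℝ m) = Nat.choose (m + 3) 3 := by
  rw [show restrictTotalDegree (Fin 3) ℝ m
      = restrictSupport ℝ { n : Fin 3 →₀ ℕ | (n.sum fun _ e => e) ≤ m } from rfl,
    Module.finrank_eq_nat_card_basis
    (basisRestrictSupport ℝ { n : Fin 3 →₀ ℕ | (n.sum fun _ e => e) ≤ m })]
  exact card_count m

/- ### The integration functional -/

lemma integrable_eval {P : Set (Fin 3 → ℝ)} (hPb : Bornology.IsBounded P) (q : Poly3) :
    IntegrableOn (fun x => eval x q) P volume :=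
  ((MvPolynomial.continuous_eval q).continuousOn.integrableOn_compact
    hPb.isCompact_closure).mono_set subset_closure

def intFun (P : Set (Fin 3 → ℝ)) (hPb : Bornology.IsBounded P) : Poly3 →ₗ[ℝ] ℝ where
  toFun q := ∫ x in P, eval x q
  map_add' q₁ q₂ := by
    simp only [map_add]
    rw [integral_add (integrable_eval hPb q₁) (integrable_eval hPb q₂)]
  map_smul' c q := by
    simp only [smul_eq_C_mul, map_mul, eval_C, RingHom.id_apply, smul_eq_mul]
    rw [integral_const_mul]

/-- Let `n ≥ 1` and let `P ⊂ ℝ³` be a bounded domain of positive measure.  Every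
polynomial in `P_{n-1}` with zero mean over `P` is the divergence of a vector
polynomial in `[P_n]³`, and the space of zero-mean polynomials of degree at most
`n-1` has dimension `π_{n-1,3} - 1 = binom(n-1+3, 3) - 1`. -/
theorem zero_mean_poly_is_divergence (n : ℕ) (hn : 1 ≤ n)
    (P : Set (Fin 3 → ℝ)) (hPo : IsOpen P) (hPb : Bornology.IsBounded P)
    (hPm : 0 < volume P) :
    (∀ q : Poly3, q.totalDegree ≤ n - 1 → (∫ x in P, eval x q) = 0 →
      ∃ v : Fin 3 → Poly3, (∀ i, (v i).totalDegree ≤ n) ∧ pdiv v = q) ∧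
    Module.finrank ℝ ↥(zeroMeanPolys P hPb (n - 1)) = Nat.choose (n - 1 + 3) 3 - 1 := by
  constructor
  · intro q hq _
    refine ⟨![antideriv q, 0, 0], ?_, ?_⟩
    · intro i
      fin_cases i
      · exact (antideriv_degree q).trans (by omega)
      · simp [totalDegree_zero]
      · simp [totalDegree_zero]
    · simp [pdiv, Fin.sum_univ_three, pderiv_antideriv]
  · set V := restrictTotalDegree (Fin 3) ℝ (n - 1)
    set L := (intFun P hPb).domRestrict V with hL
    -- the zero-mean subspace is the image of the kernel of `L`
    have hmap : zeroMeanPolys P hPb (n - 1) = Submodule.map V.subtype (LinearMap.ker L) := by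
      ext q
      constructor
      · rintro ⟨hd, hi⟩
        exact ⟨⟨q, hd⟩, hi, rfl⟩
      · rintro ⟨⟨q', hq'⟩, hker, rfl⟩
        exact ⟨hq', hker⟩
    rw [hmap, Submodule.finrank_map_subtype_eq]
    -- `L` is surjective since the constant `1` has positive integral
    have hone : (1 : Poly3) ∈ V := by
      rw [mem_restrictTotalDegree]
      simp [totalDegree_one]
    have hL1 : L ⟨1, hone⟩ = (volume P).toReal := by
      show (∫ x in P, eval x (1 : Poly3)) = (volume P).toReal
      simp [setIntegral_const, measureReal_def]
    have hvol : (volume P).toReal ≠ 0 :=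
      (ENNReal.toReal_pos hPm.ne' hPb.measure_lt_top.ne).ne'
    have hsurj : Function.Surjective L := by
      intro y
      refine ⟨(y / (volume P).toReal) • ⟨1, hone⟩, ?_⟩
      rw [L.map_smul, hL1, smul_eq_mul]
      field_simp
    have hrange : LinearMap.range L = ⊤ := LinearMap.range_eq_top.mpr hsurj
    have hrk := LinearMap.finrank_range_add_finrank_ker L
    rw [hrange] at hrk
    have htop : Module.finrank ℝ (⊤ : Submodule ℝ ℝ) = 1 := by
      rw [finrank_top]; exact Module.finrank_self ℝ
    rw [htop] at hrk
    have hV : Module.finrank ℝ V = Nat.choose (n - 1 + 3) 3 := finrank_restrict (n - 1)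
    rw [hV] at hrk
    omega

end
end
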